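/- Let N be a nontrivial proper normal subgroup of a finite group G. Then (G,N) is a Camina pair if and only if every irreducible complex character of G whose kernel does not contain N vanishes on G∖N; that is, for every finite-dimensional irreducible complex representation ρ of G such that ρ(n) is not the identity for some n ∈ N, the character of ρ takes the value 0 at every x ∈ G∖N. -/

import Mathlib

open CategoryTheory FDRep Representation MonoidAlgebra

noncomputable section

namespace CaminaAux

variable {G : Type} [Group G]

/-- Restriction of a representation to an invariant submodule. -/
def resRep (Y : FDRep ℂ G) (p : Submodule ℂ Y) (hp : ∀ (g : G), ∀ v ∈ p, Y.ρ g v ∈ p) :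
    Representation ℂ G ↥p where
  toFun g := (Y.ρ g).restrict (hp g)
  map_one' := by ext v; simp [LinearMap.restrict_apply]
  map_mul' g h := by ext v; simp [LinearMap.restrict_apply]

def inclHom (Y : FDRep ℂ G) (p : Submodule ℂ Y) (hp : ∀ (g : G), ∀ v ∈ p, Y.ρ g v ∈ p) :
    FDRep.of (resRep Y p hp) ⟶ Y :=
  ⟨FGModuleCat.ofHom p.subtype, fun g => by ext v; rfl⟩

theorem mono_inclHom (Y : FDRep ℂ G) (p : Submodule ℂ Y) (hp : ∀ (g : G), ∀ v ∈ p, Y.ρ g v ∈ p) :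
    Mono (inclHom Y p hp) := by
  constructor
  intro Z a b hab
  ext z
  have := congrArg Action.Hom.hom hab
  simp only [Action.comp_hom] at this
  have h3 : (p.subtype).comp a.hom.hom.hom = (p.subtype).comp b.hom.hom.hom := by
    exact congrArg (fun f => f.hom.hom) this
  have h2 := DFunLike.congr_fun h3 z
  exact h2

theorem submodule_eq_top_of_invariant (V : FDRep ℂ G) (hV : Simple V) (p : Submodule ℂ V)
    (hp : ∀ (g : G), ∀ v ∈ p, V.ρ g v ∈ p) (hne : p ≠ ⊥) : p = ⊤ := by
  haveI := hV
  haveI := mono_inclHom V p hp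
  obtain ⟨v, hvp, hv0⟩ := Submodule.exists_mem_ne_zero_of_ne_bot hne
  have hf0 : inclHom V p hp ≠ 0 := by
    intro h
    apply hv0
    have := congrArg Action.Hom.hom h
    have h2 := ConcreteCategory.congr_hom this ⟨v, hvp⟩
    simp [inclHom] at h2
    exact h2
  haveI : IsIso (inclHom V p hp) := isIso_of_mono_of_nonzero hf0
  rw [Submodule.eq_top_iff']
  intro w
  have h1 : inv (inclHom V p hp) ≫ inclHom V p hp = 𝟙 V := IsIso.inv_hom_id _
  have h2 := ConcreteCategory.congr_hom (congrArg Action.Hom.hom h1) w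
  simp only [Action.comp_hom, Action.id_hom] at h2
  have h4 : p.subtype ((inv (inclHom V p hp)).hom w) = w := h2
  rw [← h4]
  exact ((inv (inclHom V p hp)).hom w).2

/-- Forward direction: in a Camina pair, irreducible characters not containing `N` in their
kernel vanish off `N`. -/
theorem forward [Fintype G] (N : Subgroup G) [N.Normal]
    (hC : ∀ x ∉ N, ∀ n ∈ N, IsConj x (x * n)) (V : FDRep ℂ G) (hV : Simple V)
    (hN : ∃ n ∈ N, V.ρ n ≠ 1) {x : G} (hx : x ∉ N) : V.character x = 0 := by
  haveI : Fintype ↥N := Fintype.ofFinite _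
  haveI : Invertible ((Fintype.card ↥N : ℂ)) :=
    invertibleOfNonzero (by exact_mod_cast (Fintype.card_ne_zero : Fintype.card ↥N ≠ 0))
  set ρ' : Representation ℂ (↥N) V := V.ρ.comp N.subtype with hρ'
  have hinv : invariants ρ' = ⊥ := by
    by_contra hne
    have hstable : ∀ (g : G), ∀ v ∈ invariants ρ', V.ρ g v ∈ invariants ρ' := by
      intro g v hv
      rw [mem_invariants] at hv ⊢
      intro n
      have h1 : (g⁻¹ * (n : G) * g) ∈ N := by
        have := Subgroup.Normal.conj_mem ‹N.Normal› (n : G) n.2 g⁻¹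
        simpa using this
      have : ρ' n (V.ρ g v) = V.ρ g (ρ' ⟨g⁻¹ * (n : G) * g, h1⟩ v) := by
        show V.ρ ↑n (V.ρ g v) = V.ρ g (V.ρ (g⁻¹ * ↑n * g) v)
        rw [← Module.End.mul_apply, ← map_mul, ← Module.End.mul_apply, ← map_mul]
        congr 1
        group
      rw [this, hv]
    have htop := submodule_eq_top_of_invariant V hV (invariants ρ') hstable hne
    obtain ⟨n, hn, hn1⟩ := hN
    apply hn1
    ext v
    have hv : v ∈ invariants ρ' := htop ▸ Submodule.mem_top
    exact (mem_invariants ρ' v).mp hv ⟨n, hn⟩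
  have hsum : (∑ n : ↥N, ρ' n) = 0 := by
    have h1 : averageMap ρ' = 0 := by
      ext v
      have h2 := (isProj_averageMap ρ').map_mem v
      rw [hinv, Submodule.mem_bot] at h2
      simpa using h2
    have h2 : averageMap ρ' = ⅟ ((Fintype.card ↥N : ℂ)) • ∑ n : ↥N, ρ' n := by
      rw [averageMap, GroupAlgebra.average, map_smul, map_sum]
      congr 1
      exact Finset.sum_congr rfl fun n _ => asAlgebraHom_single_one ρ' n
    rw [h1] at h2
    have h3 := congrArg (fun f => (Fintype.card ↥N : ℂ) • f) h2
    simpa [smul_smul] using h3.symm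
  have hchar : ∀ n : ↥N, V.character (x * n) = V.character x := by
    intro n
    obtain ⟨c, hc⟩ := hC x hx n n.2
    have h2 : (c : G) * x * (c : G)⁻¹ = x * (n : G) := by
      rw [mul_inv_eq_iff_eq_mul]
      exact hc
    rw [← h2, FDRep.char_conj]
  have hkey : (Fintype.card ↥N : ℂ) * V.character x = 0 := by
    have e1 : ∑ n : ↥N, V.character (x * n) = (Fintype.card ↥N : ℂ) * V.character x := by
      simp [hchar, Finset.sum_const, nsmul_eq_mul]
    have e2 : ∑ n : ↥N, V.character (x * n) = LinearMap.trace ℂ V (V.ρ x * ∑ n : ↥N, ρ' n) := by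
      rw [Finset.mul_sum, map_sum]
      exact Finset.sum_congr rfl fun n _ => by
        show LinearMap.trace ℂ V (V.ρ (x * ↑n)) = _
        rw [map_mul]
        rfl
    rw [← e1, e2, hsum, mul_zero, map_zero]
  have hcard : (Fintype.card ↥N : ℂ) ≠ 0 := by exact_mod_cast Fintype.card_ne_zero
  exact (mul_eq_zero.mp hkey).resolve_left hcard

abbrev A (G : Type) [Group G] := MonoidAlgebra ℂ G

instance fdA [Fintype G] : FiniteDimensional ℂ (A G) :=
  Module.Finite.equiv ((MonoidAlgebra.coeffLinearEquiv ℂ).trans (Finsupp.linearEquivFunOnFinite ℂ ℂ G)).symm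

instance fdSub [Fintype G] (W : Submodule (A G) (A G)) : FiniteDimensional ℂ ↥W :=
  FiniteDimensional.finiteDimensional_submodule (W.restrictScalars ℂ)

/-- The representation of `G` on a left ideal of its group algebra. -/
def mulRep [Fintype G] (W : Submodule (A G) (A G)) : Representation ℂ G ↥W where
  toFun g :=
    { toFun := fun x => (MonoidAlgebra.of ℂ G g : A G) • x
      map_add' := fun a b => smul_add _ a b
      map_smul' := fun c a => Subtype.ext (by
        show (MonoidAlgebra.of ℂ G g : A G) • (c • (a : A G)) = c • ((of ℂ G g : A G) • (a : A G))
        exact smul_comm _ c _) }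
  map_one' := LinearMap.ext fun a => by
    show ((of ℂ G 1 : A G) • a : ↥W) = a
    rw [map_one, one_smul]
  map_mul' g h := LinearMap.ext fun a => by
    show ((of ℂ G (g * h) : A G) • a : ↥W) = (of ℂ G g : A G) • ((of ℂ G h : A G) • a)
    rw [map_mul, mul_smul]

lemma mulRep_apply [Fintype G] (W : Submodule (A G) (A G)) (g : G) (x : ↥W) :
    mulRep W g x = (of ℂ G g : A G) • x := rfl

section Simplicity
variable [Fintype G]

/-- Upgrade a `ℂ`-submodule of `↥W` stable under the `G`-action to an `A G`-submodule. -/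
def toASubmodule (W : Submodule (A G) (A G)) (p : Submodule ℂ ↥W)
    (hp : ∀ g : G, ∀ v ∈ p, mulRep W g v ∈ p) : Submodule (A G) ↥W where
  carrier := p
  add_mem' := fun ha hb => p.add_mem ha hb
  zero_mem' := p.zero_mem
  smul_mem' := by
    intro a v hv
    induction a using MonoidAlgebra.induction with
    | zero => simpa using p.zero_mem
    | single_add g r f _ _ ih =>
      rw [add_smul]
      refine p.add_mem ?_ ih
      have h1 : (MonoidAlgebra.single g r : A G) = r • (of ℂ G g : A G) := by
        rw [MonoidAlgebra.of_apply, MonoidAlgebra.smul_single, smul_eq_mul, mul_one]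
      rw [h1, smul_assoc]
      exact p.smul_mem r (hp g v hv)

theorem simple_mulRep (W : Submodule (A G) (A G)) (hW : IsSimpleModule (A G) ↥W) :
    Simple (FDRep.of (mulRep W)) := by
  haveI := hW
  haveI : Nontrivial ↥W := IsSimpleModule.nontrivial (A G) ↥W
  constructor
  intro Y f hf
  constructor
  · intro hiso h0
    obtain ⟨w, hw⟩ := exists_ne (0 : ↥W)
    apply hw
    have hid : 𝟙 (FDRep.of (mulRep W)) = inv f ≫ f := (IsIso.inv_hom_id f).symm
    have h2 : inv f ≫ f = inv f ≫ 0 := congrArg (fun q => inv f ≫ q) h0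
    rw [Limits.comp_zero] at h2
    have := ConcreteCategory.congr_hom (congrArg Action.Hom.hom (hid.trans h2)) w
    simp at this
    exact this
  · intro hne
    let F : ↥Y.V →ₗ[ℂ] ↥W := f.hom.hom.hom
    have hFf : ∀ y : ↥Y.V, F y = f.hom y := fun _ => rfl
    have hequiv : ∀ (g : G) (y : ↥Y.V), F (Y.ρ g y) = mulRep W g (F y) := by
      intro g y
      have h1 : F.comp (Y.ρ g) = (mulRep W g).comp F := by
        have := congrArg (fun q => q.hom.hom) (f.comm g)
        exact this
      exact DFunLike.congr_fun h1 y
    have hinj : Function.Injective F := by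
      rw [← LinearMap.ker_eq_bot]
      set K : Submodule ℂ ↥Y.V := LinearMap.ker F with hK
      have hKst : ∀ (g : G), ∀ v ∈ K, Y.ρ g v ∈ K := by
        intro g v hv
        rw [LinearMap.mem_ker] at hv ⊢
        exact (hequiv g v).trans (by rw [hv, map_zero])
      have h0 : inclHom Y K hKst ≫ f = 0 ≫ f := by
        rw [Limits.zero_comp]
        apply Action.hom_ext
        apply FGModuleCat.hom_ext
        apply LinearMap.ext
        intro v
        exact v.2
      have hg0 : inclHom Y K hKst = 0 := (cancel_mono f).mp h0
      rw [eq_bot_iff]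
      intro v hv
      have := ConcreteCategory.congr_hom (congrArg Action.Hom.hom hg0) ⟨v, hv⟩
      exact this
    have hsur : Function.Surjective F := by
      set R : Submodule ℂ ↥W := LinearMap.range F with hR
      have hRst : ∀ (g : G), ∀ v ∈ R, mulRep W g v ∈ R := by
        rintro g v ⟨y, rfl⟩
        exact ⟨Y.ρ g y, hequiv g y⟩
      rcases eq_bot_or_eq_top (toASubmodule W R hRst) with hbot | htop
      · exfalso
        apply hne
        have hR0 : R = ⊥ := by
          rw [eq_bot_iff]
          intro z hz
          have hz2 : z ∈ toASubmodule W R hRst := hz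
          rw [hbot] at hz2
          simpa using hz2
        have hF0 : F = 0 := LinearMap.range_eq_bot.mp (hR ▸ hR0)
        apply Action.hom_ext
        apply FGModuleCat.hom_ext
        apply LinearMap.ext
        intro y
        show F y = (0 : Y ⟶ FDRep.of (mulRep W)).hom y
        rw [hF0]
        rfl
      · intro w
        have hw : w ∈ toASubmodule W R hRst := htop ▸ Submodule.mem_top
        exact hw
    let e : ↥Y.V ≃ₗ[ℂ] ↥W := LinearEquiv.ofBijective F ⟨hinj, hsur⟩
    have hcomm : ∀ g : G,
        (e.symm.toLinearMap).comp (mulRep W g) = (Y.ρ g).comp e.symm.toLinearMap := by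
      intro g
      apply LinearMap.ext
      intro w
      apply hinj
      show F (e.symm (mulRep W g w)) = F (Y.ρ g (e.symm w))
      have h1 : ∀ u : ↥W, F (e.symm u) = u := fun u => e.apply_symm_apply u
      rw [hequiv]
      rw [h1, h1]
    refine ⟨⟨⟨FGModuleCat.ofHom e.symm.toLinearMap, fun g => by
      ext w; exact LinearMap.congr_fun (hcomm g) w⟩, ?_, ?_⟩⟩
    · apply Action.hom_ext
      apply FGModuleCat.hom_ext
      apply LinearMap.ext
      intro y
      show e.symm (F y) = y
      exact e.symm_apply_apply y
    · apply Action.hom_ext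
      apply FGModuleCat.hom_ext
      apply LinearMap.ext
      intro w
      show F (e.symm w) = w
      exact e.apply_symm_apply w

end Simplicity

/-- Schur: a `G`-equivariant endomorphism of a simple representation with trace zero is zero. -/
theorem schur_zero (V : FDRep ℂ G) (hV : Simple V) (φ : V →ₗ[ℂ] V)
    (hcomm : ∀ g : G, φ.comp (V.ρ g) = (V.ρ g).comp φ)
    (htr : LinearMap.trace ℂ V φ = 0) : φ = 0 := by
  haveI := hV
  have hnt : Nontrivial V := by
    by_contra hsub
    rw [not_nontrivial_iff_subsingleton] at hsub
    apply id_nonzero V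
    ext v
    haveI : Subsingleton ((CategoryTheory.forget (FGModuleCat ℂ)).obj V.V) := hsub
    exact Subsingleton.elim _ _
  let f : V ⟶ V := ⟨FGModuleCat.ofHom φ, fun g => by
    ext v; exact LinearMap.congr_fun (hcomm g) v⟩
  have hfin : Module.finrank ℂ (V ⟶ V) = 1 := by
    rw [FDRep.finrank_hom_simple_simple V V, if_pos ⟨Iso.refl V⟩]
  obtain ⟨c, hc⟩ := (finrank_eq_one_iff_of_nonzero' (𝟙 V) (id_nonzero V)).mp hfin f
  have hφ : φ = c • LinearMap.id := by
    have := congrArg (fun q => q.hom.hom.hom) hc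
    exact this.symm
  have htr2 : c * (Module.finrank ℂ V : ℂ) = 0 := by
    rw [hφ] at htr
    simpa [LinearMap.trace_id] using htr
  have hfr : (Module.finrank ℂ V : ℂ) ≠ 0 := by
    haveI := hnt
    have h := Module.finrank_pos (R := ℂ) (M := V)
    exact_mod_cast h.ne'
  have hc0 : c = 0 := by
    rcases mul_eq_zero.mp htr2 with h | h
    · exact h
    · exact absurd h hfr
  rw [hφ, hc0, zero_smul]

/-- If all simple characters agree on `g` and `h`, then `g` and `h` are conjugate. -/
theorem isConj_of_char_eq [Fintype G] {g h : G}
    (hchar : ∀ V : FDRep ℂ G, Simple V → V.character g = V.character h) : IsConj g h := by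
  classical
  haveI : NeZero ((Fintype.card G : ℂ)) :=
    ⟨by exact_mod_cast (Fintype.card_ne_zero : Fintype.card G ≠ 0)⟩
  set bg : A G := ∑ t : G, (of ℂ G (t * g * t⁻¹) : A G) with hbg
  set bh : A G := ∑ t : G, (of ℂ G (t * h * t⁻¹) : A G) with hbh
  have hcen : ∀ (u : G) (s : G),
      (of ℂ G s : A G) * (∑ t : G, (of ℂ G (t * u * t⁻¹) : A G)) =
        (∑ t : G, (of ℂ G (t * u * t⁻¹) : A G)) * of ℂ G s := by
    intro u s
    rw [Finset.mul_sum, Finset.sum_mul]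
    refine Fintype.sum_equiv (Equiv.mulLeft s) _ _ fun t => ?_
    show (of ℂ G s : A G) * of ℂ G (t * u * t⁻¹) = of ℂ G ((s * t) * u * (s * t)⁻¹) * of ℂ G s
    rw [← map_mul, ← map_mul]
    congr 1
    group
  have hbcomm : ∀ s : G, (of ℂ G s : A G) * (bg - bh) = (bg - bh) * of ℂ G s := by
    intro s
    rw [mul_sub, sub_mul, hbg, hbh, hcen g s, hcen h s]
  -- The difference annihilates every simple submodule of the group algebra.
  have hann : ∀ (W : Submodule (A G) (A G)), IsSimpleModule (A G) ↥W →
      ∀ x : ↥W, (bg - bh) • x = 0 := by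
    intro W hW x
    haveI := hW
    set φ : ↥W →ₗ[ℂ] ↥W :=
      (∑ t : G, mulRep W (t * g * t⁻¹)) - (∑ t : G, mulRep W (t * h * t⁻¹)) with hφdef
    have hφ : ∀ y : ↥W, φ y = (bg - bh) • y := by
      intro y
      have e1 : φ y = (∑ t : G, mulRep W (t * g * t⁻¹) y) - (∑ t : G, mulRep W (t * h * t⁻¹) y) := by
        show ((∑ t : G, mulRep W (t * g * t⁻¹)) - (∑ t : G, mulRep W (t * h * t⁻¹))) y = _
        rw [LinearMap.sub_apply, LinearMap.sum_apply, LinearMap.sum_apply]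
      have e2 : (bg - bh) • y = bg • y - bh • y := sub_smul bg bh y
      have e3 : bg • y = ∑ t : G, ((of ℂ G (t * g * t⁻¹) : A G) • y) := by
        rw [hbg]; exact Finset.sum_smul
      have e4 : bh • y = ∑ t : G, ((of ℂ G (t * h * t⁻¹) : A G) • y) := by
        rw [hbh]; exact Finset.sum_smul
      rw [e1, e2, e3, e4]
      simp only [mulRep_apply]
    have hφcomm : ∀ s : G, φ.comp (mulRep W s) = (mulRep W s).comp φ := by
      intro s
      apply LinearMap.ext
      intro y
      show φ (mulRep W s y) = mulRep W s (φ y)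
      rw [hφ, hφ, mulRep_apply, mulRep_apply, smul_smul, smul_smul, ← hbcomm]
    have htr : LinearMap.trace ℂ ↥W φ = 0 := by
      have hch : ∀ u : G, LinearMap.trace ℂ ↥W (mulRep W u) =
          (FDRep.of (mulRep W)).character u := fun u => rfl
      have t2 : LinearMap.trace ℂ ↥W (∑ t : G, mulRep W (t * g * t⁻¹)) =
          ∑ t : G, LinearMap.trace ℂ ↥W (mulRep W (t * g * t⁻¹)) := map_sum _ _ _
      have t3 : LinearMap.trace ℂ ↥W (∑ t : G, mulRep W (t * h * t⁻¹)) =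
          ∑ t : G, LinearMap.trace ℂ ↥W (mulRep W (t * h * t⁻¹)) := map_sum _ _ _
      have t1 : LinearMap.trace ℂ ↥W φ =
          LinearMap.trace ℂ ↥W (∑ t : G, mulRep W (t * g * t⁻¹)) -
            LinearMap.trace ℂ ↥W (∑ t : G, mulRep W (t * h * t⁻¹)) := by
        rw [hφdef]; exact map_sub (LinearMap.trace ℂ ↥W) _ _
      rw [t1, t2, t3]
      simp only [hch]
      have h2 : ∀ t : G, (FDRep.of (mulRep W)).character (t * g * t⁻¹) =
          (FDRep.of (mulRep W)).character g := fun t => FDRep.char_conj _ g t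
      have h3 : ∀ t : G, (FDRep.of (mulRep W)).character (t * h * t⁻¹) =
          (FDRep.of (mulRep W)).character h := fun t => FDRep.char_conj _ h t
      simp only [h2, h3, Finset.sum_const, Finset.card_univ]
      rw [hchar (FDRep.of (mulRep W)) (simple_mulRep W hW)]
      ring
    have hzero := schur_zero (FDRep.of (mulRep W)) (simple_mulRep W hW) φ hφcomm htr
    have h7 : φ x = 0 := by rw [hzero]; rfl
    exact (hφ x).symm.trans h7
  -- Hence it annihilates everything, so it is zero.
  have hall : ∀ y : A G, (bg - bh) * y = 0 := by
    intro y
    have hy : y ∈ (⊤ : Submodule (A G) (A G)) := trivial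
    rw [← IsSemisimpleModule.sSup_simples_eq_top (A G) (A G), sSup_eq_iSup'] at hy
    refine Submodule.iSup_induction
      (motive := fun z => (bg - bh) * z = 0) _ hy ?_ ?_ ?_
    · rintro ⟨W, hW⟩ z hz
      show (bg - bh) * z = 0
      have := hann W hW ⟨z, hz⟩
      have h2 := congrArg Subtype.val this
      simpa using h2
    · show (bg - bh) * 0 = 0
      rw [mul_zero]
    · intro a b ha hb
      show (bg - bh) * (a + b) = 0
      rw [mul_add, ha, hb, add_zero]
  have hbgbh : bg = bh := by
    have := hall 1
    rw [mul_one, sub_eq_zero] at this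
    exact this
  -- Compare coefficients at `g`.
  have hexists : ∃ t : G, t * h * t⁻¹ = g := by
    by_contra hno
    push_neg at hno
    have h1 : (bg : A G).coeff g = (bh : A G).coeff g := by rw [hbgbh]
    have h2 : (bg : A G).coeff g = ((Finset.univ.filter fun t : G => t * g * t⁻¹ = g).card : ℂ) := by
      rw [hbg, MonoidAlgebra.coeff_sum, Finsupp.finset_sum_apply]
      simp only [MonoidAlgebra.of_apply, MonoidAlgebra.coeff_single, Finsupp.single_apply]
      simp [Finset.sum_boole]
    have h3 : (bh : A G).coeff g = 0 := by
      rw [hbh, MonoidAlgebra.coeff_sum, Finsupp.finset_sum_apply]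
      simp only [MonoidAlgebra.of_apply, MonoidAlgebra.coeff_single, Finsupp.single_apply]
      refine Finset.sum_eq_zero fun t _ => ?_
      rw [if_neg (hno t)]
    rw [h3, h2] at h1
    have h4 : (1 : G) ∈ Finset.univ.filter fun t : G => t * g * t⁻¹ = g := by
      simp
    have h5 : (Finset.univ.filter fun t : G => t * g * t⁻¹ = g).card ≠ 0 :=
      Finset.card_ne_zero_of_mem h4
    exact h5 (by exact_mod_cast h1)
  obtain ⟨t, ht⟩ := hexists
  exact (isConj_iff.mpr ⟨t, ht⟩).symm

end CaminaAux

end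

/-- `(G, N)` is a Camina pair: `N` is a nontrivial proper (normal) subgroup of `G` and
every `x ∈ G \ N` is conjugate to every element of the coset `xN`. -/
def IsCaminaPair {G : Type*} [Group G] (N : Subgroup G) : Prop :=
  N ≠ ⊥ ∧ N ≠ ⊤ ∧ ∀ x ∉ N, ∀ n ∈ N, IsConj x (x * n)

theorem camina_iff_characters_vanish (G : Type) [Group G] [Fintype G]
    (N : Subgroup G) [N.Normal] (hbot : N ≠ ⊥) (htop : N ≠ ⊤) :
    IsCaminaPair N ↔
      ∀ V : FDRep ℂ G, CategoryTheory.Simple V →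
        (∃ n ∈ N, V.ρ n ≠ 1) → ∀ x ∉ N, V.character x = 0 := by
  constructor
  · rintro ⟨-, -, hC⟩ V hV hN x hx
    exact CaminaAux.forward N hC V hV hN hx
  · intro hyp
    refine ⟨hbot, htop, ?_⟩
    intro x hx n hn
    apply CaminaAux.isConj_of_char_eq
    intro V hV
    by_cases htriv : ∀ m ∈ N, V.ρ m = 1
    · show LinearMap.trace ℂ V (V.ρ x) = LinearMap.trace ℂ V (V.ρ (x * n))
      rw [map_mul, htriv n hn, mul_one]
    · push_neg at htriv
      have hxn : x * n ∉ N := by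
        intro hmem
        apply hx
        have : x = (x * n) * n⁻¹ := by group
        rw [this]
        exact N.mul_mem hmem (N.inv_mem hn)
      rw [hyp V hV htriv x hx, hyp V hV htriv (x * n) hxn]
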